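/- For every δ > 0 there are explicit constants (C = 1 and c = 2δ/(2δ+1)) such that the noisy voter model with noise parameter δ on any finite graph G with n vertices has optimal temporal mixing: for every pair of initial configurations η, ξ ∈ {0,1}^{V(G)} and every t ≥ 0, the total variation distance satisfies ‖P_t(η,·) − P_t(ξ,·)‖ ≤ n·exp(−(2δ/(2δ+1))·t). -/

import Mathlib

open Finset

/-- Total variation distance between two (probability) measures on a finite set:
the maximum over all events `A` of `|μ₁(A) - μ₂(A)|`. -/
noncomputable def tvDist {S : Type*} [Fintype S] (μ ν : S → ℝ) : ℝ :=
  Finset.univ.powerset.sup' (Finset.powerset_nonempty _) fun A =>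
    |∑ s ∈ A, μ s - ∑ s ∈ A, ν s|

/-- Flip rate of the noisy voter model with noise `δ` at vertex `x` in configuration `η`. -/
noncomputable def nvRate {V : Type*} [Fintype V] (G : SimpleGraph V) [DecidableRel G.Adj]
    (δ : ℝ) (x : V) (η : V → Bool) : ℝ :=
  (1 / (2 * δ + 1)) *
    ((1 / (G.degree x : ℝ)) * ((Finset.univ.filter fun y => G.Adj x y ∧ η y ≠ η x).card : ℝ) + δ)

/-- The rate matrix of the noisy voter model: single-spin flips occur at rate `nvRate`,
transitions changing two or more spins have rate `0`, and diagonal entries make rows sum to `0`. -/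
noncomputable def nvQ {V : Type*} [Fintype V] [DecidableEq V] (G : SimpleGraph V)
    [DecidableRel G.Adj] (δ : ℝ) : Matrix (V → Bool) (V → Bool) ℝ := fun η η' =>
  if η = η' then -∑ x, nvRate G δ x η
  else if (Finset.univ.filter fun v => η v ≠ η' v).card = 1 then
    ∑ x ∈ Finset.univ.filter (fun v => η v ≠ η' v), nvRate G δ x η
  else 0

/-! ### Auxiliary matrix-exponential lemmas -/

open NormedSpace
open scoped Matrix

theorem NV.pow_intertwine {m n : Type*} [Fintype m] [Fintype n] [DecidableEq m] [DecidableEq n]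
    (B : Matrix m m ℝ) (C : Matrix m n ℝ) (A : Matrix n n ℝ) (h : B * C = C * A) :
    ∀ k : ℕ, B ^ k * C = C * A ^ k := by
  intro k
  induction k with
  | zero => simp
  | succ k ih =>
    rw [pow_succ, pow_succ, Matrix.mul_assoc, h, ← Matrix.mul_assoc, ih, Matrix.mul_assoc]

theorem NV.exp_intertwine {m n : Type*} [Fintype m] [Fintype n] [DecidableEq m] [DecidableEq n]
    (B : Matrix m m ℝ) (C : Matrix m n ℝ) (A : Matrix n n ℝ) (h : B * C = C * A) :
    exp B * C = C * exp A := by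
  letI : SeminormedRing (Matrix m m ℝ) := Matrix.linftyOpSemiNormedRing
  letI : NormedRing (Matrix m m ℝ) := Matrix.linftyOpNormedRing
  letI : NormedAlgebra ℝ (Matrix m m ℝ) := Matrix.linftyOpNormedAlgebra
  letI : SeminormedRing (Matrix n n ℝ) := Matrix.linftyOpSemiNormedRing
  letI : NormedRing (Matrix n n ℝ) := Matrix.linftyOpNormedRing
  letI : NormedAlgebra ℝ (Matrix n n ℝ) := Matrix.linftyOpNormedAlgebra
  have hB : HasSum (fun k : ℕ => ((k.factorial : ℝ))⁻¹ • B ^ k) (exp B) :=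
    exp_series_hasSum_exp' B
  have hA : HasSum (fun k : ℕ => ((k.factorial : ℝ))⁻¹ • A ^ k) (exp A) :=
    exp_series_hasSum_exp' A
  have hmulC : Continuous fun X : Matrix m m ℝ => X * C :=
    continuous_id.matrix_mul continuous_const
  have hmulC' : Continuous fun Y : Matrix n n ℝ => C * Y :=
    continuous_const.matrix_mul continuous_id
  have h1 : HasSum (fun k : ℕ => ((k.factorial : ℝ))⁻¹ • B ^ k * C) (exp B * C) :=
    hB.map (AddMonoidHom.mk' (fun X => X * C) fun X Y => Matrix.add_mul X Y C) hmulC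
  have h2 : HasSum (fun k : ℕ => C * (((k.factorial : ℝ))⁻¹ • A ^ k)) (C * exp A) :=
    hA.map (AddMonoidHom.mk' (fun Y => C * Y) fun X Y => Matrix.mul_add C X Y) hmulC'
  refine h1.unique ?_
  convert h2 using 2 with k
  rw [Matrix.smul_mul, Matrix.mul_smul, NV.pow_intertwine B C A h k]

theorem NV.matrix_pow_entry_nonneg {m : Type*} [Fintype m] [DecidableEq m]
    (N : Matrix m m ℝ) (hN : ∀ i j, 0 ≤ N i j) : ∀ (k : ℕ) (i j : m), 0 ≤ (N ^ k) i j := by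
  intro k
  induction k with
  | zero =>
    intro i j
    rw [pow_zero]
    by_cases h : i = j <;> simp [Matrix.one_apply, h]
  | succ k ih =>
    intro i j
    rw [pow_succ, Matrix.mul_apply]
    exact Finset.sum_nonneg fun l _ => mul_nonneg (ih i l) (hN l j)

theorem NV.exp_entry_nonneg_of_nonneg {m : Type*} [Fintype m] [DecidableEq m]
    (N : Matrix m m ℝ) (hN : ∀ i j, 0 ≤ N i j) (i j : m) : 0 ≤ exp N i j := by
  letI : SeminormedRing (Matrix m m ℝ) := Matrix.linftyOpSemiNormedRing
  letI : NormedRing (Matrix m m ℝ) := Matrix.linftyOpNormedRing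
  letI : NormedAlgebra ℝ (Matrix m m ℝ) := Matrix.linftyOpNormedAlgebra
  have hs : HasSum (fun k : ℕ => ((k.factorial : ℝ))⁻¹ • N ^ k) (exp N) :=
    exp_series_hasSum_exp' N
  have hev : Continuous fun X : Matrix m m ℝ => X i j := continuous_id.matrix_elem i j
  have ht : Filter.Tendsto
      (fun K : ℕ => (∑ k ∈ Finset.range K, ((k.factorial : ℝ))⁻¹ • N ^ k) i j)
      Filter.atTop (nhds (exp N i j)) :=
    (hev.continuousAt.tendsto.comp hs.tendsto_sum_nat)
  refine ge_of_tendsto' ht fun K => ?_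
  rw [Matrix.sum_apply]
  refine Finset.sum_nonneg fun k _ => ?_
  rw [Matrix.smul_apply]
  exact mul_nonneg (by positivity) (NV.matrix_pow_entry_nonneg N hN k i j)

theorem NV.exp_smul_one (a : ℝ) {m : Type*} [Fintype m] [DecidableEq m] :
    exp (a • (1 : Matrix m m ℝ)) = Real.exp a • (1 : Matrix m m ℝ) := by
  have h1 : a • (1 : Matrix m m ℝ) = Matrix.diagonal (fun _ => a) := by
    ext i j
    by_cases h : i = j <;> simp [Matrix.one_apply, Matrix.diagonal, h]
  have h2 : Real.exp a • (1 : Matrix m m ℝ) = Matrix.diagonal (fun _ => Real.exp a) := by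
    ext i j
    by_cases h : i = j <;> simp [Matrix.one_apply, Matrix.diagonal, h]
  rw [h1, h2, Matrix.exp_diagonal]
  have h3 : (exp fun _ : m => a) = fun _ : m => Real.exp a := by
    funext x
    rw [Pi.coe_exp (fun _ => a) x, Real.exp_eq_exp_ℝ]
  rw [h3]

theorem NV.exp_entry_nonneg {m : Type*} [Fintype m] [DecidableEq m]
    (R : Matrix m m ℝ) (h : ∀ i j, i ≠ j → 0 ≤ R i j) (i j : m) : 0 ≤ exp R i j := by
  set lam : ℝ := ∑ k, |R k k| with hlam
  have hlc : ∀ k, -R k k ≤ lam := fun k =>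
    le_trans (neg_le_abs _) (Finset.single_le_sum (f := fun k => |R k k|)
      (fun _ _ => abs_nonneg _) (Finset.mem_univ k))
  have hN : ∀ a b, 0 ≤ (R + lam • (1 : Matrix m m ℝ)) a b := by
    intro a b
    by_cases hab : a = b
    · subst hab
      have := hlc a
      simp only [Matrix.add_apply, Matrix.smul_apply, Matrix.one_apply_eq, smul_eq_mul, mul_one]
      linarith
    · have := h a b hab
      simp only [Matrix.add_apply, Matrix.smul_apply, Matrix.one_apply_ne hab, smul_eq_mul,
        mul_zero, add_zero]
      linarith
  have hsplit : R = (-lam) • (1 : Matrix m m ℝ) + (R + lam • 1) := by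
    rw [neg_smul]; abel
  have hcomm : Commute ((-lam) • (1 : Matrix m m ℝ)) (R + lam • 1) :=
    ((Commute.one_left _).smul_left (-lam))
  rw [hsplit, Matrix.exp_add_of_commute _ _ hcomm, NV.exp_smul_one]
  rw [Matrix.smul_mul, Matrix.one_mul, Matrix.smul_apply]
  exact mul_nonneg (Real.exp_nonneg _) (NV.exp_entry_nonneg_of_nonneg _ hN i j)

/-! ### The coupled noisy voter generator -/

section Coupling

variable {V : Type*} [Fintype V] [DecidableEq V]

/-- Rates of the elementary moves of the (synchronous) coupling: at each vertex `z`, reset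
to each value `b` at rate `δ/(2δ+1)`, and copy each neighbour `w` at rate `1/((2δ+1) d(z))`. -/
noncomputable def cRate (G : SimpleGraph V) [DecidableRel G.Adj] (δ : ℝ) :
    V × (Bool ⊕ V) → ℝ
  | (_, Sum.inl _) => δ / (2 * δ + 1)
  | (z, Sum.inr w) => if G.Adj z w then (1 / (2 * δ + 1)) * (1 / (G.degree z : ℝ)) else 0

/-- The effect of an elementary move on one configuration. -/
def cJump : V × (Bool ⊕ V) → (V → Bool) → (V → Bool)
  | (z, Sum.inl b), σ => Function.update σ z b
  | (z, Sum.inr w), σ => Function.update σ z (σ w)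

theorem cRate_nonneg (G : SimpleGraph V) [DecidableRel G.Adj] {δ : ℝ} (hδ : 0 < δ)
    (i : V × (Bool ⊕ V)) : 0 ≤ cRate G δ i := by
  obtain ⟨z, b | w⟩ := i
  · simp only [cRate]
    positivity
  · simp only [cRate]
    split
    · positivity
    · exact le_rfl

theorem cJump_apply_ne (i : V × (Bool ⊕ V)) (σ : V → Bool) {y : V} (hy : y ≠ i.1) :
    cJump i σ y = σ y := by
  obtain ⟨z, b | w⟩ := i <;> exact Function.update_of_ne hy _ _

theorem cJump_apply_self_inl (z : V) (b : Bool) (σ : V → Bool) :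
    cJump (z, Sum.inl b) σ z = b := Function.update_self _ _ _

theorem cJump_apply_self_inr (z w : V) (σ : V → Bool) :
    cJump (z, Sum.inr w) σ z = σ w := Function.update_self _ _ _

theorem sum_ite_count {α : Type*} [Fintype α] (P : α → Prop) [DecidablePred P] (a : ℝ) :
    ∑ w, (if P w then a else 0) = ((Finset.univ.filter P).card : ℝ) * a := by
  rw [Finset.sum_ite, Finset.sum_const, Finset.sum_const_zero, add_zero, nsmul_eq_mul]

theorem sum_adj_ite (G : SimpleGraph V) [DecidableRel G.Adj] (z : V) (a : ℝ) :
    ∑ w, (if G.Adj z w then a else 0) = (G.degree z : ℝ) * a := by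
  rw [sum_ite_count]
  congr 2
  rw [← SimpleGraph.card_neighborFinset_eq_degree, SimpleGraph.neighborFinset_eq_filter]

/-- The single-site generator `nvQ` written as a sum over elementary moves. -/
theorem moves_nvQ (G : SimpleGraph V) [DecidableRel G.Adj] {δ : ℝ} (hδ : 0 < δ)
    (hdeg : ∀ v, 1 ≤ G.degree v) (σ σ' : V → Bool) :
    ∑ i : V × (Bool ⊕ V), cRate G δ i *
      ((if cJump i σ = σ' then 1 else 0) - (if σ = σ' then 1 else 0)) = nvQ G δ σ σ' := by
  have hd1 : (0:ℝ) < 2 * δ + 1 := by linarith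
  by_cases hss : σ = σ'
  · subst hss
    rw [nvQ, if_pos rfl, Fintype.sum_prod_type]
    have hmain : ∀ z : V, (∑ mm : Bool ⊕ V, cRate G δ (z, mm) *
        ((if cJump (z, mm) σ = σ then 1 else 0) - 1)) = -(nvRate G δ z σ) := by
      intro z
      have hdz : (0:ℝ) < (G.degree z : ℝ) := by
        exact_mod_cast Nat.lt_of_lt_of_le Nat.zero_lt_one (hdeg z)
      rw [Fintype.sum_sum_type]
      have hb : ∀ b : Bool, cRate G δ (z, Sum.inl b) *
          ((if cJump (z, Sum.inl b) σ = σ then 1 else 0) - 1) =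
          if σ z = b then 0 else -(δ / (2 * δ + 1)) := by
        intro b
        simp only [cRate, cJump]
        by_cases hzb : σ z = b
        · rw [if_pos hzb]
          have h1 : Function.update σ z b = σ := by
            rw [Function.update_eq_self_iff]; exact hzb.symm
          erw [if_pos h1]; ring
        · rw [if_neg hzb]
          have h1 : Function.update σ z b ≠ σ := by
            rw [Ne, Function.update_eq_self_iff]; exact fun h => hzb h.symm
          erw [if_neg h1]; ring
      have hw : ∀ w : V, cRate G δ (z, Sum.inr w) *
          ((if cJump (z, Sum.inr w) σ = σ then 1 else 0) - 1) =
          if G.Adj z w ∧ σ w ≠ σ z then -((1 / (2 * δ + 1)) * (1 / (G.degree z : ℝ))) else 0 := by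
        intro w
        simp only [cRate, cJump]
        by_cases hadj : G.Adj z w
        · rw [if_pos hadj]
          by_cases hws : σ w = σ z
          · have h1 : Function.update σ z (σ w) = σ := by
              rw [Function.update_eq_self_iff]; exact hws
            have h2 : ¬(G.Adj z w ∧ σ w ≠ σ z) := fun hc => hc.2 hws
            erw [if_pos h1, if_neg h2]; ring
          · have h1 : Function.update σ z (σ w) ≠ σ := by
              rw [Ne, Function.update_eq_self_iff]; exact fun h => hws h
            erw [if_neg h1, if_pos ⟨hadj, hws⟩]; ring
        · have h2 : ¬(G.Adj z w ∧ σ w ≠ σ z) := fun hc => hadj hc.1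
          rw [if_neg hadj, if_neg h2]; ring
      rw [Finset.sum_congr rfl fun b _ => hb b, Finset.sum_congr rfl fun w _ => hw w]
      rw [sum_ite_count]
      have hbsum : ∑ b : Bool, (if σ z = b then (0:ℝ) else -(δ / (2 * δ + 1))) =
          -(δ / (2 * δ + 1)) := by
        rw [Fintype.sum_bool]
        cases hsz : σ z <;> simp
      rw [hbsum, nvRate]
      field_simp
      ring
    rw [Finset.sum_congr rfl fun z _ => hmain z, Finset.sum_neg_distrib]
    exact (if_pos rfl).symm
  · rw [nvQ, if_neg hss]
    simp only [if_neg hss, sub_zero]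
    by_cases hcard : (Finset.univ.filter fun v => σ v ≠ σ' v).card = 1
    · rw [if_pos hcard]
      obtain ⟨x, hx⟩ := Finset.card_eq_one.mp hcard
      have hxmem : σ x ≠ σ' x := by
        have : x ∈ Finset.univ.filter fun v => σ v ≠ σ' v := by rw [hx]; exact Finset.mem_singleton_self x
        exact (Finset.mem_filter.mp this).2
      have hoff : ∀ y, y ≠ x → σ y = σ' y := by
        intro y hy
        by_contra hne
        have : y ∈ Finset.univ.filter fun v => σ v ≠ σ' v :=
          Finset.mem_filter.mpr ⟨Finset.mem_univ y, hne⟩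
        rw [hx, Finset.mem_singleton] at this
        exact hy this
      rw [hx, Finset.sum_singleton]
      have hdx : (0:ℝ) < (G.degree x : ℝ) := by
        exact_mod_cast Nat.lt_of_lt_of_le Nat.zero_lt_one (hdeg x)
      -- only moves at vertex x can contribute
      rw [Fintype.sum_prod_type]
      rw [Finset.sum_eq_single_of_mem x (Finset.mem_univ x) ?side]
      case side =>
        intro z _ hzx
        refine Finset.sum_eq_zero fun mm _ => ?_
        have hne : cJump (z, mm) σ ≠ σ' := by
          intro h
          have := cJump_apply_ne (z, mm) σ (y := x) (by simpa using (Ne.symm hzx))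
          rw [h] at this
          exact hxmem this.symm
        rw [if_neg hne, mul_zero]
      · -- moves at x
        have hupd : ∀ b : Bool, (Function.update σ x b = σ') ↔ b = σ' x := by
          intro b
          constructor
          · intro h
            rw [← h, Function.update_self]
          · intro h
            funext y
            by_cases hyx : y = x
            · subst hyx; rw [Function.update_self, h]
            · rw [Function.update_of_ne hyx]; exact hoff y hyx
        have hflip : σ' x = !(σ x) := by
          cases hsx : σ x <;> cases hsx' : σ' x <;> simp_all
        rw [Fintype.sum_sum_type]
        have hbpart : ∑ b : Bool, cRate G δ (x, Sum.inl b) *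
            (if cJump (x, Sum.inl b) σ = σ' then 1 else 0) = δ / (2 * δ + 1) := by
          simp only [cRate, cJump]
          rw [Fintype.sum_bool]
          rcases hsx' : σ' x with _ | _ <;>
            simp [hupd, hsx']
        have hwpart : ∀ w : V, cRate G δ (x, Sum.inr w) *
            (if cJump (x, Sum.inr w) σ = σ' then 1 else 0) =
            if G.Adj x w ∧ σ w ≠ σ x then (1 / (2 * δ + 1)) * (1 / (G.degree x : ℝ)) else 0 := by
          intro w
          simp only [cRate, cJump]
          by_cases hadj : G.Adj x w
          · rw [if_pos hadj]
            by_cases hws : σ w = σ x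
            · have : Function.update σ x (σ w) ≠ σ' := by
                rw [Ne, hupd]
                rw [hflip, hws]
                simp
              have h2 : ¬(G.Adj x w ∧ σ w ≠ σ x) := fun hc => hc.2 hws
              erw [if_neg this, if_neg h2]; ring
            · have : Function.update σ x (σ w) = σ' := by
                rw [hupd, hflip]
                cases hsw : σ w <;> cases hsx : σ x <;> simp_all
              erw [if_pos this, if_pos ⟨hadj, hws⟩]; ring
          · have h2 : ¬(G.Adj x w ∧ σ w ≠ σ x) := fun hc => hadj hc.1
            rw [if_neg hadj, if_neg h2]; ring
        rw [hbpart, Finset.sum_congr rfl fun w _ => hwpart w, sum_ite_count, nvRate]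
        ring
    · rw [if_neg hcard]
      have hpos : 0 < (Finset.univ.filter fun v => σ v ≠ σ' v).card := by
        rw [Finset.card_pos]
        obtain ⟨y, hy⟩ := Function.ne_iff.mp hss
        exact ⟨y, Finset.mem_filter.mpr ⟨Finset.mem_univ y, hy⟩⟩
      have h2 : 1 < (Finset.univ.filter fun v => σ v ≠ σ' v).card :=
        lt_of_le_of_ne hpos (Ne.symm hcard)
      obtain ⟨x₁, hx₁, x₂, hx₂, hne⟩ := Finset.one_lt_card.mp h2
      refine Finset.sum_eq_zero fun i _ => ?_
      have : cJump i σ ≠ σ' := by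
        intro h
        have key : ∀ y, y ≠ i.1 → σ y = σ' y := by
          intro y hy
          have := cJump_apply_ne i σ hy
          rw [h] at this
          exact this.symm
        have e1 : x₁ = i.1 := by
          by_contra hc
          exact (Finset.mem_filter.mp hx₁).2 (key x₁ hc)
        have e2 : x₂ = i.1 := by
          by_contra hc
          exact (Finset.mem_filter.mp hx₂).2 (key x₂ hc)
        exact hne (e1.trans e2.symm)
      rw [if_neg this, mul_zero]

/-- The generator of the synchronous coupling of two copies of the noisy voter model. -/
noncomputable def Qbar (G : SimpleGraph V) [DecidableRel G.Adj] (δ : ℝ) :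
    Matrix ((V → Bool) × (V → Bool)) ((V → Bool) × (V → Bool)) ℝ := fun s s' =>
  ∑ i : V × (Bool ⊕ V), cRate G δ i *
    ((if (cJump i s.1, cJump i s.2) = s' then 1 else 0) - (if s = s' then 1 else 0))

theorem Qbar_mul_apply (G : SimpleGraph V) [DecidableRel G.Adj] (δ : ℝ)
    {κ : Type*} [Fintype κ] (C : Matrix ((V → Bool) × (V → Bool)) κ ℝ)
    (s : (V → Bool) × (V → Bool)) (j : κ) :
    (Qbar G δ * C) s j =
      ∑ i : V × (Bool ⊕ V), cRate G δ i * (C (cJump i s.1, cJump i s.2) j - C s j) := by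
  rw [Matrix.mul_apply]
  simp only [Qbar, Finset.sum_mul]
  rw [Finset.sum_comm]
  refine Finset.sum_congr rfl fun i _ => ?_
  simp only [mul_sub, sub_mul, mul_assoc, ite_mul, one_mul, zero_mul, mul_ite, mul_zero]
  rw [Finset.sum_sub_distrib, Finset.sum_ite_eq, Finset.sum_ite_eq]
  simp [mul_sub]

/-- Projection onto the first coordinate. -/
def Pi1 : Matrix ((V → Bool) × (V → Bool)) (V → Bool) ℝ := fun s σ' => if s.1 = σ' then 1 else 0

/-- Projection onto the second coordinate. -/
def Pi2 : Matrix ((V → Bool) × (V → Bool)) (V → Bool) ℝ := fun s σ' => if s.2 = σ' then 1 else 0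

/-- Discrepancy indicator at each vertex. -/
def Mdisc : Matrix ((V → Bool) × (V → Bool)) V ℝ := fun s y => if s.1 y = s.2 y then 0 else 1

/-- One-particle generator governing the discrepancy process. -/
noncomputable def Amat (G : SimpleGraph V) [DecidableRel G.Adj] (δ : ℝ) : Matrix V V ℝ :=
  fun y w => (if G.Adj y w then (1 / (2 * δ + 1)) * (1 / (G.degree y : ℝ)) else 0) -
    (if y = w then 1 else 0)

theorem Qbar_mul_Pi1 (G : SimpleGraph V) [DecidableRel G.Adj] {δ : ℝ} (hδ : 0 < δ)
    (hdeg : ∀ v, 1 ≤ G.degree v) : Qbar G δ * Pi1 (V := V) = Pi1 (V := V) * nvQ G δ := by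
  ext s σ'
  have hR : ((Pi1 : Matrix ((V → Bool) × (V → Bool)) (V → Bool) ℝ) * nvQ G δ) s σ' =
      nvQ G δ s.1 σ' := by
    rw [Matrix.mul_apply]
    simp only [Pi1, ite_mul, one_mul, zero_mul]
    rw [Finset.sum_ite_eq]
    simp
  rw [Qbar_mul_apply, hR, ← moves_nvQ G hδ hdeg s.1 σ']
  exact Finset.sum_congr rfl fun i _ => rfl

theorem Qbar_mul_Pi2 (G : SimpleGraph V) [DecidableRel G.Adj] {δ : ℝ} (hδ : 0 < δ)
    (hdeg : ∀ v, 1 ≤ G.degree v) : Qbar G δ * Pi2 (V := V) = Pi2 (V := V) * nvQ G δ := by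
  ext s σ'
  have hR : ((Pi2 : Matrix ((V → Bool) × (V → Bool)) (V → Bool) ℝ) * nvQ G δ) s σ' =
      nvQ G δ s.2 σ' := by
    rw [Matrix.mul_apply]
    simp only [Pi2, ite_mul, one_mul, zero_mul]
    rw [Finset.sum_ite_eq]
    simp
  rw [Qbar_mul_apply, hR, ← moves_nvQ G hδ hdeg s.2 σ']
  exact Finset.sum_congr rfl fun i _ => rfl

theorem Qbar_mul_Mdisc (G : SimpleGraph V) [DecidableRel G.Adj] {δ : ℝ} (hδ : 0 < δ)
    (hdeg : ∀ v, 1 ≤ G.degree v) : Qbar G δ * Mdisc (V := V) = Mdisc (V := V) * (Amat G δ)ᵀ := by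
  ext s y
  have hd1 : (0:ℝ) < 2 * δ + 1 := by linarith
  have hdy : (0:ℝ) < (G.degree y : ℝ) := by
    exact_mod_cast Nat.lt_of_lt_of_le Nat.zero_lt_one (hdeg y)
  rw [Qbar_mul_apply, Fintype.sum_prod_type]
  rw [Finset.sum_eq_single_of_mem y (Finset.mem_univ y) ?side]
  case side =>
    intro z _ hzy
    refine Finset.sum_eq_zero fun mm _ => ?_
    have e1 : cJump (z, mm) s.1 y = s.1 y := cJump_apply_ne (z, mm) s.1 (Ne.symm hzy)
    have e2 : cJump (z, mm) s.2 y = s.2 y := cJump_apply_ne (z, mm) s.2 (Ne.symm hzy)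
    have e3 : Mdisc (cJump (z, mm) s.1, cJump (z, mm) s.2) y = Mdisc s y := by
      simp only [Mdisc, e1, e2]
    rw [e3, sub_self, mul_zero]
  rw [Fintype.sum_sum_type]
  have hb : ∀ b : Bool, cRate G δ (y, Sum.inl b) *
      (Mdisc (cJump (y, Sum.inl b) s.1, cJump (y, Sum.inl b) s.2) y - Mdisc s y) =
      (δ / (2 * δ + 1)) * (0 - Mdisc s y) := by
    intro b
    have e1 : cJump (y, Sum.inl b) s.1 y = b := cJump_apply_self_inl y b s.1
    have e2 : cJump (y, Sum.inl b) s.2 y = b := cJump_apply_self_inl y b s.2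
    have e3 : Mdisc (cJump (y, Sum.inl b) s.1, cJump (y, Sum.inl b) s.2) y = 0 := by
      simp [Mdisc, e1, e2]
    rw [e3]
    rfl
  have hw : ∀ w : V, cRate G δ (y, Sum.inr w) *
      (Mdisc (cJump (y, Sum.inr w) s.1, cJump (y, Sum.inr w) s.2) y - Mdisc s y) =
      (if G.Adj y w then (1 / (2 * δ + 1)) * (1 / (G.degree y : ℝ)) else 0) *
        (Mdisc s w - Mdisc s y) := by
    intro w
    have e1 : cJump (y, Sum.inr w) s.1 y = s.1 w := cJump_apply_self_inr y w s.1
    have e2 : cJump (y, Sum.inr w) s.2 y = s.2 w := cJump_apply_self_inr y w s.2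
    have e3 : Mdisc (cJump (y, Sum.inr w) s.1, cJump (y, Sum.inr w) s.2) y = Mdisc s w := by
      simp only [Mdisc, e1, e2]
    rw [e3]
    rfl
  rw [Finset.sum_congr rfl fun b _ => hb b, Finset.sum_congr rfl fun w _ => hw w]
  have hsum1 : ∑ w, (if G.Adj y w then (1 / (2 * δ + 1)) * (1 / (G.degree y : ℝ)) else 0) *
      (Mdisc s w - Mdisc s y) =
      (∑ w, (if G.Adj y w then (1 / (2 * δ + 1)) * (1 / (G.degree y : ℝ)) else 0) * Mdisc s w)
        - (1 / (2 * δ + 1)) * Mdisc s y := by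
    simp_rw [mul_sub]
    rw [Finset.sum_sub_distrib, ← Finset.sum_mul, sum_adj_ite]
    congr 1
    field_simp
  have hRHS : ((Mdisc : Matrix ((V → Bool) × (V → Bool)) V ℝ) * (Amat G δ)ᵀ) s y =
      (∑ w, (if G.Adj y w then (1 / (2 * δ + 1)) * (1 / (G.degree y : ℝ)) else 0) * Mdisc s w)
        - Mdisc s y := by
    rw [Matrix.mul_apply]
    simp only [Matrix.transpose_apply, Amat, mul_sub, mul_ite, mul_zero, mul_one]
    rw [Finset.sum_sub_distrib]
    congr 1
    · refine Finset.sum_congr rfl fun w _ => ?_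
      by_cases h : G.Adj y w <;> simp [h] <;> ring
    · rw [Finset.sum_ite_eq]
      simp
  rw [hRHS, hsum1, Fintype.sum_bool]
  field_simp
  ring

theorem Amat_mul_J (G : SimpleGraph V) [DecidableRel G.Adj] {δ : ℝ} (hδ : 0 < δ)
    (hdeg : ∀ v, 1 ≤ G.degree v) :
    Amat G δ * (Matrix.of fun _ _ : V => (1:ℝ)) =
      (Matrix.of fun _ _ : V => (1:ℝ)) * ((-(2 * δ / (2 * δ + 1))) • (1 : Matrix V V ℝ)) := by
  ext y w'
  have hd1 : (0:ℝ) < 2 * δ + 1 := by linarith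
  have hdy : (0:ℝ) < (G.degree y : ℝ) := by
    exact_mod_cast Nat.lt_of_lt_of_le Nat.zero_lt_one (hdeg y)
  rw [Matrix.mul_apply, Matrix.mul_apply]
  simp only [Matrix.of_apply, Amat, Matrix.smul_apply, Matrix.one_apply, smul_eq_mul, mul_one,
    one_mul, mul_ite, mul_zero]
  rw [Finset.sum_sub_distrib, sum_adj_ite, Finset.sum_ite_eq, Finset.sum_ite_eq']
  simp only [Finset.mem_univ, if_true]
  field_simp
  ring

theorem Qbar_offdiag_nonneg (G : SimpleGraph V) [DecidableRel G.Adj] {δ : ℝ} (hδ : 0 < δ)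
    {s s' : (V → Bool) × (V → Bool)} (hss : s ≠ s') : 0 ≤ Qbar G δ s s' := by
  simp only [Qbar, if_neg hss, sub_zero]
  refine Finset.sum_nonneg fun i _ => mul_nonneg (cRate_nonneg G hδ i) ?_
  split <;> norm_num

theorem Amat_offdiag_nonneg (G : SimpleGraph V) [DecidableRel G.Adj] {δ : ℝ} (hδ : 0 < δ)
    {y w : V} (hyw : y ≠ w) : 0 ≤ Amat G δ y w := by
  simp only [Amat, if_neg hyw, sub_zero]
  split
  · have : (0:ℝ) ≤ (G.degree y : ℝ) := Nat.cast_nonneg _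
    positivity
  · exact le_rfl

end Coupling

theorem noisy_voter_optimal_temporal_mixing
    {V : Type*} [Fintype V] [DecidableEq V] (δ : ℝ) (hδ : 0 < δ)
    (G : SimpleGraph V) [DecidableRel G.Adj] (hdeg : ∀ v, 1 ≤ G.degree v)
    (η ξ : V → Bool) (t : ℝ) (ht : 0 ≤ t) :
    tvDist (fun σ => NormedSpace.exp (t • nvQ G δ) η σ)
        (fun σ => NormedSpace.exp (t • nvQ G δ) ξ σ) ≤
      (Fintype.card V : ℝ) * Real.exp (-(2 * δ / (2 * δ + 1)) * t) := by
  classical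
  have hd1 : (0:ℝ) < 2 * δ + 1 := by linarith
  -- notation
  set J : Matrix V V ℝ := Matrix.of fun _ _ : V => (1:ℝ) with hJdef
  -- intertwining relations
  have h1 : exp (t • Qbar G δ) * Pi1 (V := V) = Pi1 (V := V) * exp (t • nvQ G δ) := by
    apply NV.exp_intertwine
    rw [Matrix.smul_mul, Matrix.mul_smul, Qbar_mul_Pi1 G hδ hdeg]
  have h2 : exp (t • Qbar G δ) * Pi2 (V := V) = Pi2 (V := V) * exp (t • nvQ G δ) := by
    apply NV.exp_intertwine
    rw [Matrix.smul_mul, Matrix.mul_smul, Qbar_mul_Pi2 G hδ hdeg]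
  have h3 : exp (t • Qbar G δ) * Mdisc (V := V) = Mdisc (V := V) * exp ((t • Amat G δ)ᵀ) := by
    apply NV.exp_intertwine
    rw [Matrix.transpose_smul, Matrix.smul_mul, Matrix.mul_smul, Qbar_mul_Mdisc G hδ hdeg]
  have hTr : exp ((t • Amat G δ)ᵀ) = (exp (t • Amat G δ))ᵀ := Matrix.exp_transpose _
  -- nonnegativity of entries
  have hKnn : ∀ p q, 0 ≤ exp (t • Qbar G δ) p q := by
    refine fun p q => NV.exp_entry_nonneg _ (fun p q hpq => ?_) p q
    rw [Matrix.smul_apply]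
    exact mul_nonneg ht (Qbar_offdiag_nonneg G hδ hpq)
  have hBnn : ∀ y w, 0 ≤ exp (t • Amat G δ) y w := by
    refine fun y w => NV.exp_entry_nonneg _ (fun y w hyw => ?_) y w
    rw [Matrix.smul_apply]
    exact mul_nonneg ht (Amat_offdiag_nonneg G hδ hyw)
  -- row sums of the one-particle semigroup
  have hJscale : (t • Amat G δ) * J = J * ((-(2 * δ / (2 * δ + 1)) * t) • (1 : Matrix V V ℝ)) := by
    rw [Matrix.smul_mul, Amat_mul_J G hδ hdeg, Matrix.mul_smul, smul_smul, mul_comm,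
      Matrix.mul_smul]
  have hrow : ∀ y : V, ∑ w, exp (t • Amat G δ) y w =
      Real.exp (-(2 * δ / (2 * δ + 1)) * t) := by
    intro y
    have h5 := NV.exp_intertwine _ _ _ hJscale
    rw [NV.exp_smul_one] at h5
    have h6 : (exp (t • Amat G δ) * J) y y =
        (J * (Real.exp (-(2 * δ / (2 * δ + 1)) * t) • (1 : Matrix V V ℝ))) y y := by rw [h5]
    rw [Matrix.mul_apply, Matrix.mul_apply] at h6
    simp only [hJdef, Matrix.of_apply, Matrix.smul_apply, Matrix.one_apply, smul_eq_mul,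
      mul_one, one_mul, mul_ite, mul_zero] at h6
    rw [Finset.sum_ite_eq'] at h6
    simpa using h6
  -- bounds on Mdisc
  have hMnn : ∀ (p : (V → Bool) × (V → Bool)) (y : V), (0:ℝ) ≤ Mdisc p y := by
    intro p y
    simp only [Mdisc]
    split <;> norm_num
  have hMle : ∀ (p : (V → Bool) × (V → Bool)) (y : V), Mdisc p y ≤ (1:ℝ) := by
    intro p y
    simp only [Mdisc]
    split <;> norm_num
  -- unfold the total variation distance
  simp only [tvDist]
  refine Finset.sup'_le _ _ fun A hA => ?_
  set s₀ : (V → Bool) × (V → Bool) := (η, ξ) with hs₀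
  have hent1 : ∀ σ' : V → Bool, exp (t • nvQ G δ) η σ' =
      ((exp (t • Qbar G δ) * Pi1 (V := V) :
        Matrix ((V → Bool) × (V → Bool)) (V → Bool) ℝ)) s₀ σ' := by
    intro σ'
    rw [h1, Matrix.mul_apply]
    simp only [Pi1, ite_mul, one_mul, zero_mul]
    rw [Finset.sum_ite_eq]
    simp [hs₀]
  have hent2 : ∀ σ' : V → Bool, exp (t • nvQ G δ) ξ σ' =
      ((exp (t • Qbar G δ) * Pi2 (V := V) :
        Matrix ((V → Bool) × (V → Bool)) (V → Bool) ℝ)) s₀ σ' := by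
    intro σ'
    rw [h2, Matrix.mul_apply]
    simp only [Pi2, ite_mul, one_mul, zero_mul]
    rw [Finset.sum_ite_eq]
    simp [hs₀]
  have hdiff : ∑ σ' ∈ A, exp (t • nvQ G δ) η σ' - ∑ σ' ∈ A, exp (t • nvQ G δ) ξ σ' =
      ∑ p : (V → Bool) × (V → Bool), exp (t • Qbar G δ) s₀ p *
        ((if p.1 ∈ A then 1 else 0) - (if p.2 ∈ A then 1 else 0)) := by
    rw [← Finset.sum_sub_distrib]
    calc ∑ σ' ∈ A, (exp (t • nvQ G δ) η σ' - exp (t • nvQ G δ) ξ σ')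
        = ∑ σ' ∈ A, ∑ p : (V → Bool) × (V → Bool),
            (exp (t • Qbar G δ) s₀ p * Pi1 p σ' - exp (t • Qbar G δ) s₀ p * Pi2 p σ') := by
          refine Finset.sum_congr rfl fun σ' _ => ?_
          rw [hent1 σ', hent2 σ', Matrix.mul_apply, Matrix.mul_apply, ← Finset.sum_sub_distrib]
      _ = ∑ p : (V → Bool) × (V → Bool), ∑ σ' ∈ A,
            (exp (t • Qbar G δ) s₀ p * Pi1 p σ' - exp (t • Qbar G δ) s₀ p * Pi2 p σ') :=
          Finset.sum_comm
      _ = ∑ p : (V → Bool) × (V → Bool), exp (t • Qbar G δ) s₀ p *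
            ((if p.1 ∈ A then 1 else 0) - (if p.2 ∈ A then 1 else 0)) := by
          refine Finset.sum_congr rfl fun p _ => ?_
          rw [Finset.sum_sub_distrib, ← Finset.mul_sum, ← Finset.mul_sum, ← mul_sub]
          congr 2
          · simp only [Pi1]
            rw [Finset.sum_ite_eq]
          · simp only [Pi2]
            rw [Finset.sum_ite_eq]
  have hbound : ∀ p : (V → Bool) × (V → Bool),
      |((if p.1 ∈ A then (1:ℝ) else 0) - (if p.2 ∈ A then 1 else 0))| ≤ ∑ y, Mdisc p y := by
    intro p
    by_cases hpp : p.1 = p.2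
    · rw [hpp, sub_self, abs_zero]
      exact Finset.sum_nonneg fun y _ => hMnn p y
    · obtain ⟨y₀, hy₀⟩ := Function.ne_iff.mp hpp
      have h1' : Mdisc p y₀ = 1 := by simp only [Mdisc, if_neg hy₀]
      have h2' : |((if p.1 ∈ A then (1:ℝ) else 0) - (if p.2 ∈ A then 1 else 0))| ≤ 1 := by
        by_cases ha : p.1 ∈ A <;> by_cases hb : p.2 ∈ A <;> simp [ha, hb]
      calc |((if p.1 ∈ A then (1:ℝ) else 0) - (if p.2 ∈ A then 1 else 0))| ≤ 1 := h2'
        _ = Mdisc p y₀ := h1'.symm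
        _ ≤ ∑ y, Mdisc p y :=
            Finset.single_le_sum (fun y _ => hMnn p y) (Finset.mem_univ y₀)
  rw [hdiff]
  calc |∑ p : (V → Bool) × (V → Bool), exp (t • Qbar G δ) s₀ p *
        ((if p.1 ∈ A then 1 else 0) - (if p.2 ∈ A then 1 else 0))|
      ≤ ∑ p : (V → Bool) × (V → Bool), |exp (t • Qbar G δ) s₀ p *
        ((if p.1 ∈ A then 1 else 0) - (if p.2 ∈ A then 1 else 0))| :=
        Finset.abs_sum_le_sum_abs _ _
    _ ≤ ∑ p : (V → Bool) × (V → Bool), exp (t • Qbar G δ) s₀ p * (∑ y, Mdisc p y) := by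
        refine Finset.sum_le_sum fun p _ => ?_
        rw [abs_mul, abs_of_nonneg (hKnn s₀ p)]
        exact mul_le_mul_of_nonneg_left (hbound p) (hKnn s₀ p)
    _ = ∑ y, ((exp (t • Qbar G δ) * Mdisc (V := V) :
          Matrix ((V → Bool) × (V → Bool)) V ℝ)) s₀ y := by
        simp_rw [Finset.mul_sum]
        rw [Finset.sum_comm]
        exact Finset.sum_congr rfl fun y _ => (Matrix.mul_apply).symm
    _ = ∑ y, ((Mdisc (V := V) * (exp (t • Amat G δ))ᵀ :
          Matrix ((V → Bool) × (V → Bool)) V ℝ)) s₀ y := by rw [h3, hTr]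
    _ ≤ ∑ y : V, Real.exp (-(2 * δ / (2 * δ + 1)) * t) := by
        refine Finset.sum_le_sum fun y _ => ?_
        rw [Matrix.mul_apply, ← hrow y]
        refine Finset.sum_le_sum fun w _ => ?_
        rw [Matrix.transpose_apply]
        exact mul_le_of_le_one_left (hBnn y w) (hMle s₀ w)
    _ = (Fintype.card V : ℝ) * Real.exp (-(2 * δ / (2 * δ + 1)) * t) := by
        rw [Finset.sum_const, Finset.card_univ, nsmul_eq_mul]
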